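/- The compression of a binary galled network is a tree: if N is a binary rooted phylogenetic network in which every reticulate node r has a tree-node ancestor w with two internally disjoint directed paths from w to r whose internal nodes are all tree nodes, then the compression N̄ contains no reticulate node and every non-root node of N̄ has indegree 1. -/

import Mathlib

open Relation

variable {V : Type*}

/-- Indegree of a node in a digraph given by an edge relation. -/
noncomputable def indeg (E : V → V → Prop) (v : V) : ℕ := Set.ncard {u | E u v}

/-- Outdegree of a node in a digraph given by an edge relation. -/
noncomputable def outdeg (E : V → V → Prop) (v : V) : ℕ := Set.ncard {w | E v w}

/-- A directed path from `x` to `y` in the digraph `E`, recorded as the list of its nodes. -/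
def IsDirPathE (E : V → V → Prop) (x y : V) (p : List V) : Prop :=
  p.head? = some x ∧ p.getLast? = some y ∧ p.Chain' E

/-- `Dom E root x y`: `x` is a dominator of `y`, i.e. `x` is an ancestor of `y` and every
directed path from `root` to `y` contains `x`. -/
def Dom (E : V → V → Prop) (root x y : V) : Prop :=
  Relation.TransGen E x y ∧ ∀ p, IsDirPathE E root y p → x ∈ p

/-- A rooted phylogenetic network: a rooted acyclic digraph with a unique root of indegree 0
and outdegree ≥ 1, in which every non-root node has indegree 1 or outdegree 1, and every node
is reachable from the root. -/
structure RPN (V : Type*) [Fintype V] where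
  E : V → V → Prop
  root : V
  acyclic : ∀ v, ¬ Relation.TransGen E v v
  root_indeg : indeg E root = 0
  root_outdeg : 1 ≤ outdeg E root
  degree_cond : ∀ v, v ≠ root → indeg E v = 1 ∨ outdeg E v = 1
  reachable : ∀ v, Relation.ReflTransGen E root v

namespace RPN

variable [Fintype V] (N : RPN V)

/-- A leaf: indegree 1 and outdegree 0. -/
def isLeaf (v : V) : Prop := indeg N.E v = 1 ∧ outdeg N.E v = 0

/-- A reticulate node: indegree at least 2. -/
def isRetic (v : V) : Prop := 2 ≤ indeg N.E v

/-- A tree node: the root, or a node of indegree 1 and outdegree at least 2. -/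
def isTreeN (v : V) : Prop := v = N.root ∨ (indeg N.E v = 1 ∧ 2 ≤ outdeg N.E v)

/-- A redundant node: indegree 1 and outdegree 1. -/
def isRedund (v : V) : Prop := indeg N.E v = 1 ∧ outdeg N.E v = 1

/-- A directed path from `x` to `y` in `N`. -/
def IsDirPath (x y : V) (p : List V) : Prop := IsDirPathE N.E x y p

/-- `x` lies on every directed path from the root to `y`. -/
def Dominates (x y : V) : Prop := ∀ p, N.IsDirPath N.root y p → x ∈ p

/-- A node is visible if it lies on every root-to-`ℓ` path for some leaf `ℓ`. -/
def Visible (x : V) : Prop := ∃ ℓ, N.isLeaf ℓ ∧ N.Dominates x ℓ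

/-- Tree-child: every non-leaf node has a child that is a leaf, a tree node, or a redundant
node. -/
def TreeChild : Prop :=
  ∀ u, ¬ N.isLeaf u → ∃ c, N.E u c ∧ (N.isLeaf c ∨ N.isTreeN c ∨ N.isRedund c)

/-- Edge of the subgraph induced by the tree nodes. -/
def treeE (u v : V) : Prop := N.E u v ∧ N.isTreeN u ∧ N.isTreeN v

/-- Undirected adjacency in the subgraph induced by the tree nodes. -/
def treeAdj (u v : V) : Prop := N.isTreeN u ∧ N.isTreeN v ∧ (N.E u v ∨ N.E v u)

/-- The tree-node component of a tree node `u`. -/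
def treeComp (u : V) : Set V := {v | Relation.ReflTransGen N.treeAdj u v}

/-- Edge of the subgraph induced by the reticulate nodes. -/
def reticE (u v : V) : Prop := N.E u v ∧ N.isRetic u ∧ N.isRetic v

/-- Undirected adjacency in the subgraph induced by the reticulate nodes. -/
def reticAdj (u v : V) : Prop := N.isRetic u ∧ N.isRetic v ∧ (N.E u v ∨ N.E v u)

/-- The reticulation component of a reticulate node `u`. -/
def reticComp (u : V) : Set V := {v | Relation.ReflTransGen N.reticAdj u v}

open Classical in
/-- The compression quotient map: each tree node is sent to its tree-node component, each
reticulate node to its reticulation component, and every other node to itself (as a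
singleton set). -/
noncomputable def comp (u : V) : Set V :=
  if N.isTreeN u then N.treeComp u else if N.isRetic u then N.reticComp u else {u}

/-- Edge relation of the compression `N̄`: an edge between the (distinct) images of the
endpoints of each edge of `N`. -/
def compE (A B : Set V) : Prop :=
  A ≠ B ∧ ∃ u v, N.E u v ∧ N.comp u = A ∧ N.comp v = B

/-- `N` is binary: reticulate nodes have indegree exactly 2, tree nodes outdegree exactly 2. -/
def Binary : Prop :=
  (∀ v, N.isRetic v → indeg N.E v = 2) ∧ (∀ v, N.isTreeN v → outdeg N.E v = 2)

/-- `N` is galled: every reticulate node `r` has a tree-node ancestor `w` with two internally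
disjoint directed paths from `w` to `r` in which all nodes except `r` are tree nodes. -/
def Galled : Prop :=
  ∀ r, N.isRetic r → ∃ w p q, N.isTreeN w ∧
    N.IsDirPath w r p ∧ N.IsDirPath w r q ∧ p ≠ q ∧
    (∀ x ∈ p.tail.dropLast, x ∉ q.tail.dropLast) ∧
    (∀ x ∈ p, x ≠ r → N.isTreeN x) ∧ (∀ x ∈ q, x ≠ r → N.isTreeN x)

/-- The spanning subgraph determined by a switching `s` choosing one parent of each
reticulate node. -/
def SpanE (s : V → V) (u v : V) : Prop := N.E u v ∧ (N.isRetic v → u = s v)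

/-- `S` is displayed (as a softwired cluster) at `u`: for some switching, the set of leaves
below `u` in the resulting spanning tree is exactly `S`. -/
def DisplayedAt (S : Set V) (u : V) : Prop :=
  ∃ s : V → V, (∀ v, N.isRetic v → N.E (s v) v) ∧
    {ℓ | N.isLeaf ℓ ∧ Relation.ReflTransGen (N.SpanE s) u ℓ} = S

/-- An isolated reticulate node: neither its parents nor its child are reticulate. -/
def IsolatedRetic (w : V) : Prop :=
  N.isRetic w ∧ (∀ x, N.E x w → ¬ N.isRetic x) ∧ (∀ y, N.E w y → ¬ N.isRetic y)

end RPN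

namespace RPN

variable [Fintype V] (N : RPN V)

section Aux

lemma wf_trans : WellFounded (fun a b : V => TransGen N.E a b) := by
  haveI : IsTrans V (fun a b : V => TransGen N.E a b) := ⟨fun _ _ _ h1 h2 => h1.trans h2⟩
  haveI : IsIrrefl V (fun a b : V => TransGen N.E a b) := ⟨fun a h => N.acyclic a h⟩
  exact Finite.wellFounded_of_trans_of_irrefl _

lemma indeg_pos {v : V} (hv : v ≠ N.root) : ∃ u, N.E u v := by
  rcases (N.reachable v).cases_tail with h | ⟨c, _, hc⟩
  · exact absurd h hv
  · exact ⟨c, hc⟩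

lemma no_edge_to_root {u : V} : ¬ N.E u N.root := by
  intro h
  have h0 : ({u' | N.E u' N.root} : Set V).ncard = 0 := N.root_indeg
  have h1 : ({u' | N.E u' N.root} : Set V) = ∅ := (Set.ncard_eq_zero (Set.toFinite _)).mp h0
  exact (Set.eq_empty_iff_forall_notMem.mp h1 u) h

lemma parent_unique {v u u' : V} (hv : v ≠ N.root) (hnr : ¬ N.isRetic v)
    (h : N.E u v) (h' : N.E u' v) : u = u' := by
  have h1 : ({u' | N.E u' v} : Set V).ncard ≤ 1 := by
    unfold isRetic indeg at hnr; omega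
  rcases (Set.ncard_le_one_iff_eq (Set.toFinite _)).mp h1 with he | ⟨a, ha⟩
  · exact absurd (Set.eq_empty_iff_forall_notMem.mp he u h) (by simp)
  · have hu : u ∈ ({a} : Set V) := ha ▸ (show u ∈ {x | N.E x v} from h)
    have hu' : u' ∈ ({a} : Set V) := ha ▸ (show u' ∈ {x | N.E x v} from h')
    simp only [Set.mem_singleton_iff] at hu hu'
    rw [hu, hu']

lemma retic_not_tree {v : V} (h : N.isRetic v) : ¬ N.isTreeN v := by
  unfold isRetic at h
  rintro (rfl | ⟨h1, _⟩)
  · rw [N.root_indeg] at h; omega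
  · omega

lemma tree_not_retic {v : V} (h : N.isTreeN v) : ¬ N.isRetic v :=
  fun hr => N.retic_not_tree hr h

lemma treeAdj_symm : Symmetric N.treeAdj := fun _ _ ⟨h1, h2, h3⟩ => ⟨h2, h1, h3.symm⟩

lemma treeComp_tree {t v : V} (ht : N.isTreeN t) (hv : v ∈ N.treeComp t) : N.isTreeN v := by
  induction hv with
  | refl => exact ht
  | tail _ h2 _ => exact h2.2.1

lemma treeComp_eq {t v : V} (hv : v ∈ N.treeComp t) : N.treeComp v = N.treeComp t := by
  have hs : ∀ {a b : V}, ReflTransGen N.treeAdj a b → ReflTransGen N.treeAdj b a := fun {a b} => (@Relation.ReflTransGen.stdSymm _ _ ⟨fun _ _ h => N.treeAdj_symm h⟩).symm a b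
  ext x
  exact ⟨fun h => ReflTransGen.trans hv h, fun h => ReflTransGen.trans (hs hv) h⟩

lemma tree_parent_unique {v y y' : V} (hy : N.treeE y v) (hy' : N.treeE y' v) : y = y' := by
  have hvroot : v ≠ N.root := fun h => N.no_edge_to_root (h ▸ hy.1)
  exact N.parent_unique hvroot (N.tree_not_retic hy.2.2) hy.1 hy'.1

/-- `a` is the top node of the tree-component chain above `v`. -/
def Apex (a v : V) : Prop :=
  ReflTransGen (fun x y => N.treeE y x) v a ∧ ∀ u, ¬ N.treeE u a

lemma apex_exists : ∀ v : V, N.isTreeN v → ∃ a, N.Apex a v := by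
  intro v
  induction v using WellFounded.induction N.wf_trans with
  | _ v ih =>
    intro hv
    by_cases h : ∃ u, N.treeE u v
    · obtain ⟨u, hu⟩ := h
      obtain ⟨a, ha1, ha2⟩ := ih u (TransGen.single hu.1) hu.2.1
      exact ⟨a, ReflTransGen.head hu ha1, ha2⟩
    · exact ⟨v, ReflTransGen.refl, fun u hu => h ⟨u, hu⟩⟩

lemma apex_unique_aux {a : V} (hatop : ∀ u, ¬ N.treeE u a) :
    ∀ {v : V}, ReflTransGen (fun x y => N.treeE y x) v a → ∀ b, N.Apex b v → a = b := by
  intro v hchain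
  induction hchain using ReflTransGen.head_induction_on with
  | refl =>
    intro b hb
    rcases hb.1.cases_head with h | ⟨c, hc, _⟩
    · exact h
    · exact absurd hc (hatop c)
  | @head vv c hstep htail ih =>
    intro b hb
    rcases hb.1.cases_head with h | ⟨c', hc', htail'⟩
    · subst h
      exact absurd hstep (hb.2 _)
    · have hcc : c' = c := N.tree_parent_unique hc' hstep
      subst hcc
      exact ih b ⟨htail', hb.2⟩

lemma apex_unique {v a b : V} (ha : N.Apex a v) (hb : N.Apex b v) : a = b :=
  N.apex_unique_aux ha.2 ha.1 b hb

lemma apex_congr {u v a : V} (h : N.treeAdj u v) (ha : N.Apex a u) : N.Apex a v := by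
  obtain ⟨hu, hv, he | he⟩ := h
  · exact ⟨ReflTransGen.head (show N.treeE u v from ⟨he, hu, hv⟩) ha.1, ha.2⟩
  · rcases ha.1.cases_head with hh | ⟨c, hc, htail⟩
    · subst hh
      exact absurd (show N.treeE v u from ⟨he, hv, hu⟩) (ha.2 v)
    · have hcv : c = v := N.tree_parent_unique hc ⟨he, hv, hu⟩
      subst hcv
      exact ⟨htail, ha.2⟩

lemma apex_comp {t v a : V} (hv : v ∈ N.treeComp t) (ha : N.Apex a t) : N.Apex a v := by
  induction hv with
  | refl => exact ha
  | tail _ h2 ih => exact N.apex_congr h2 ih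

lemma apex_mem {v a : V} (h : ReflTransGen (fun x y => N.treeE y x) v a) :
    a ∈ N.treeComp v :=
  ReflTransGen.mono (fun x y (hxy : N.treeE y x) => show N.treeAdj x y from ⟨hxy.2.2, hxy.2.1, Or.inr hxy.1⟩) _ _ h

lemma entry_apex {v u : V} (hvt : N.isTreeN v) (hu : N.E u v) (hunt : ¬ N.isTreeN u) :
    N.Apex v v := by
  refine ⟨ReflTransGen.refl, fun y hy => ?_⟩
  have hvroot : v ≠ N.root := fun h => N.no_edge_to_root (h ▸ hu)
  have : y = u := N.parent_unique hvroot (N.tree_not_retic hvt) hy.1 hu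
  exact hunt (this ▸ hy.2.1)

lemma entry_unique {t : V} (ht : N.isTreeN t) {u v u' v' : V}
    (hv : v ∈ N.treeComp t) (hv' : v' ∈ N.treeComp t)
    (hu : N.E u v) (hu' : N.E u' v')
    (h1 : ¬ N.isTreeN u) (h2 : ¬ N.isTreeN u') : u = u' := by
  have hs : ∀ {a b : V}, ReflTransGen N.treeAdj a b → ReflTransGen N.treeAdj b a := fun {a b} => (@Relation.ReflTransGen.stdSymm _ _ ⟨fun _ _ h => N.treeAdj_symm h⟩).symm a b
  have hvt : N.isTreeN v := N.treeComp_tree ht hv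
  have hv't : N.isTreeN v' := N.treeComp_tree ht hv'
  have hav : N.Apex v v := N.entry_apex hvt hu h1
  have hav' : N.Apex v' v' := N.entry_apex hv't hu' h2
  have havt : N.Apex v t := N.apex_comp (hs hv) hav
  have hav't : N.Apex v' t := N.apex_comp (hs hv') hav'
  have hvv : v = v' := N.apex_unique havt hav't
  subst hvv
  have hvroot : v ≠ N.root := fun h => N.no_edge_to_root (h ▸ hu)
  exact N.parent_unique hvroot (N.tree_not_retic hvt) hu hu'

lemma root_no_entry {v u : V} (hv : v ∈ N.treeComp N.root) (hu : N.E u v)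
    (hunt : ¬ N.isTreeN u) : False := by
  have hs : ∀ {a b : V}, ReflTransGen N.treeAdj a b → ReflTransGen N.treeAdj b a := fun {a b} => (@Relation.ReflTransGen.stdSymm _ _ ⟨fun _ _ h => N.treeAdj_symm h⟩).symm a b
  have hrt : N.isTreeN N.root := Or.inl rfl
  have hvt : N.isTreeN v := N.treeComp_tree hrt hv
  have hav : N.Apex v v := N.entry_apex hvt hu hunt
  have har : N.Apex N.root N.root :=
    ⟨ReflTransGen.refl, fun y hy => N.no_edge_to_root hy.1⟩
  have harv : N.Apex N.root v := N.apex_comp hv har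
  have : N.root = v := N.apex_unique harv hav
  exact N.no_edge_to_root (this ▸ hu)

lemma chain'_transGen {w x : V} {l : List V} (h : (w :: l).Chain' N.E) (hx : x ∈ l) :
    TransGen N.E w x := by
  induction l generalizing w with
  | nil => simp at hx
  | cons y t ih =>
    rw [List.Chain', List.isChain_cons_cons] at h
    rcases List.mem_cons.mp hx with rfl | hx'
    · exact TransGen.single h.1
    · exact TransGen.head h.1 (ih h.2 hx')

lemma head_internal {ql : List V} {w : V} (h1 : ql.head? = some w)
    (h3 : ql.Chain' N.E) (hm : w ∈ ql.tail.dropLast) : False := by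
  cases ql with
  | nil => simp at h1
  | cons x t =>
    simp only [List.head?_cons, Option.some.injEq] at h1
    subst h1
    exact N.acyclic x (N.chain'_transGen h3 (List.dropLast_subset t hm))

lemma path_penult {r : V} :
    ∀ (p : List V) (w : V), p.Chain' N.E → p.head? = some w → p.getLast? = some r →
    (∀ x ∈ p, x ≠ r → N.isTreeN x) → N.isTreeN w → w ≠ r →
    ∃ a, N.E a r ∧ a ≠ r ∧ N.isTreeN a ∧ ReflTransGen N.treeAdj w a ∧
      ((p = [w, r] ∧ a = w) ∨ a ∈ p.tail.dropLast) := by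
  intro p
  induction p with
  | nil => intro w _ hw; simp at hw
  | cons x q ih =>
    intro w hchain hhead hlast htree hwt hwr
    have hxw : x = w := by simpa using hhead
    subst hxw
    cases q with
    | nil =>
      have : x = r := by simpa using hlast
      exact absurd this hwr
    | cons y rest =>
      rw [List.Chain', List.isChain_cons_cons] at hchain
      obtain ⟨hwy, hchain'⟩ := hchain
      have hlast' : (y :: rest).getLast? = some r := by
        rwa [List.getLast?_cons_cons] at hlast
      cases rest with
      | nil =>
        have hyy : y = r := by simpa using hlast'
        subst hyy
        exact ⟨x, hwy, hwr, hwt, ReflTransGen.refl, Or.inl ⟨rfl, rfl⟩⟩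
      | cons z rest' =>
        have hyr : y ≠ r := by
          intro h
          have hrlast : r ∈ (z :: rest') := by
            have h2 : (z :: rest').getLast? = some r := by
              rwa [List.getLast?_cons_cons] at hlast'
            exact List.mem_of_getLast? h2
          rw [← h] at hrlast
          exact N.acyclic y (N.chain'_transGen hchain' hrlast)
        have hyt : N.isTreeN y := htree y (by simp) hyr
        obtain ⟨a, h1, h2, h3, h4, h5⟩ :=
          ih y hchain' rfl hlast' (fun u hu hur => htree u (by simp [hu]) hur) hyt hyr
        refine ⟨a, h1, h2, h3,
          ReflTransGen.head (show N.treeAdj x y from ⟨hwt, hyt, Or.inl hwy⟩) h4, Or.inr ?_⟩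
        rcases h5 with ⟨hq, rfl⟩ | hin
        · simp [List.dropLast]
        · have hmem : a ∈ (y :: z :: rest').dropLast := by
            rw [show (y :: z :: rest').dropLast = y :: (z :: rest').dropLast from rfl]
            exact List.mem_cons_of_mem _ hin
          simpa using hmem

lemma retic_parents (hbin : N.Binary) (hgal : N.Galled) {r : V} (hr : N.isRetic r) :
    ∃ w, N.isTreeN w ∧ ∀ u, N.E u r → N.isTreeN u ∧ u ∈ N.treeComp w := by
  obtain ⟨w, p, q, hwt, ⟨hp1, hp2, hp3⟩, ⟨hq1, hq2, hq3⟩, hpq, hdisj, hpt, hqt⟩ := hgal r hr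
  have hwr : w ≠ r := fun h => N.retic_not_tree hr (h ▸ hwt)
  obtain ⟨a, ha1, ha2, ha3, ha4, ha5⟩ := N.path_penult p w hp3 hp1 hp2 hpt hwt hwr
  obtain ⟨b, hb1, hb2, hb3, hb4, hb5⟩ := N.path_penult q w hq3 hq1 hq2 hqt hwt hwr
  have hab : a ≠ b := by
    rintro rfl
    rcases ha5 with ⟨hpw, rfl⟩ | hain
    · rcases hb5 with ⟨hqw, hbw⟩ | hbin2
      · exact hpq (hpw.trans hqw.symm)
      · exact N.head_internal hq1 hq3 hbin2
    · rcases hb5 with ⟨hqw, rfl⟩ | hbin2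
      · exact N.head_internal hp1 hp3 hain
      · exact hdisj a hain hbin2
  have hcard : ({u | N.E u r} : Set V).ncard = 2 := hbin.1 r hr
  have hsub : ({a, b} : Set V) ⊆ {u | N.E u r} := by
    rintro x (rfl | rfl)
    · exact ha1
    · exact hb1
  have heq : ({a, b} : Set V) = {u | N.E u r} :=
    Set.eq_of_subset_of_ncard_le hsub (by rw [hcard, Set.ncard_pair hab])
  refine ⟨w, hwt, fun u hu => ?_⟩
  have hmem : u ∈ ({a, b} : Set V) := heq ▸ (hu : u ∈ {x | N.E x r})
  rcases hmem with rfl | rfl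
  · exact ⟨ha3, ha4⟩
  · exact ⟨hb3, hb4⟩

lemma no_reticAdj (hbin : N.Binary) (hgal : N.Galled) :
    ∀ a b : V, ¬ N.reticAdj a b := by
  rintro a b ⟨hra, hrb, he | he⟩
  · obtain ⟨w, _, hpar⟩ := N.retic_parents hbin hgal hrb
    exact N.retic_not_tree hra (hpar a he).1
  · obtain ⟨w, _, hpar⟩ := N.retic_parents hbin hgal hra
    exact N.retic_not_tree hrb (hpar b he).1

lemma reticComp_eq (hbin : N.Binary) (hgal : N.Galled) (u : V) :
    N.reticComp u = {u} := by
  ext x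
  simp only [Set.mem_singleton_iff]
  constructor
  · intro h
    rcases (show ReflTransGen N.reticAdj u x from h).cases_head with h' | ⟨c, hc, _⟩
    · exact h'.symm
    · exact absurd hc (N.no_reticAdj hbin hgal u c)
  · rintro rfl
    exact ReflTransGen.refl

lemma comp_of_nontree (hbin : N.Binary) (hgal : N.Galled) {u : V}
    (h : ¬ N.isTreeN u) : N.comp u = {u} := by
  unfold comp
  rw [if_neg h]
  by_cases h2 : N.isRetic u
  · rw [if_pos h2, N.reticComp_eq hbin hgal]
  · rw [if_neg h2]

lemma mem_comp_self (u : V) : u ∈ N.comp u := by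
  unfold comp
  split_ifs
  · exact ReflTransGen.refl
  · exact ReflTransGen.refl
  · exact rfl

lemma comp_of_tree {v : V} (hv : N.isTreeN v) : N.comp v = N.treeComp v := by
  unfold comp; rw [if_pos hv]

lemma compE_subsingleton (hbin : N.Binary) (hgal : N.Galled) (x : V) :
    {B | N.compE B (N.comp x)}.Subsingleton := by
  rintro B1 ⟨hne1, u1, v1, he1, hcu1, hcv1⟩ B2 ⟨hne2, u2, v2, he2, hcu2, hcv2⟩
  by_cases hx : N.isTreeN x
  · -- x is a tree node: comp x = treeComp x
    have hcx : N.comp x = N.treeComp x := N.comp_of_tree hx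
    have hv1m : v1 ∈ N.treeComp x := by
      have := N.mem_comp_self v1; rw [hcv1, hcx] at this; exact this
    have hv2m : v2 ∈ N.treeComp x := by
      have := N.mem_comp_self v2; rw [hcv2, hcx] at this; exact this
    have hv1t : N.isTreeN v1 := N.treeComp_tree hx hv1m
    have hv2t : N.isTreeN v2 := N.treeComp_tree hx hv2m
    have hu1nt : ¬ N.isTreeN u1 := by
      intro hu1t
      apply hne1
      rw [← hcu1, N.comp_of_tree hu1t,
        N.treeComp_eq (show u1 ∈ N.treeComp v1 from ReflTransGen.single ⟨hv1t, hu1t, Or.inr he1⟩),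
        N.treeComp_eq hv1m, ← hcx]
    have hu2nt : ¬ N.isTreeN u2 := by
      intro hu2t
      apply hne2
      rw [← hcu2, N.comp_of_tree hu2t,
        N.treeComp_eq (show u2 ∈ N.treeComp v2 from ReflTransGen.single ⟨hv2t, hu2t, Or.inr he2⟩),
        N.treeComp_eq hv2m, ← hcx]
    have huu : u1 = u2 := N.entry_unique hx hv1m hv2m he1 he2 hu1nt hu2nt
    rw [← hcu1, ← hcu2, huu]
  · -- x is not a tree node: comp x = {x}
    have hcx : N.comp x = {x} := N.comp_of_nontree hbin hgal hx
    have hv1x : v1 = x := by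
      have := N.mem_comp_self v1; rw [hcv1] at this; rw [hcx] at this; exact this
    have hv2x : v2 = x := by
      have := N.mem_comp_self v2; rw [hcv2] at this; rw [hcx] at this; exact this
    subst hv1x; subst hv2x
    by_cases hrx : N.isRetic v2
    · obtain ⟨w, hwt, hpar⟩ := N.retic_parents hbin hgal hrx
      obtain ⟨hu1t, hu1m⟩ := hpar u1 he1
      obtain ⟨hu2t, hu2m⟩ := hpar u2 he2
      rw [← hcu1, ← hcu2, N.comp_of_tree hu1t, N.comp_of_tree hu2t,
        N.treeComp_eq hu1m, N.treeComp_eq hu2m]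
    · have hxroot : v2 ≠ N.root := fun h => hx (Or.inl h)
      have huu : u1 = u2 := N.parent_unique hxroot hrx he1 he2
      rw [← hcu1, ← hcu2, huu]

lemma compE_nonempty (hbin : N.Binary) (hgal : N.Galled) (x : V)
    (hne : N.comp x ≠ N.comp N.root) : {B | N.compE B (N.comp x)}.Nonempty := by
  by_cases hx : N.isTreeN x
  · have hcx : N.comp x = N.treeComp x := N.comp_of_tree hx
    have hroot : N.root ∉ N.treeComp x := by
      intro h
      exact hne (by rw [hcx, ← N.treeComp_eq h, ← N.comp_of_tree (Or.inl rfl)])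
    obtain ⟨a, ha⟩ := N.apex_exists x hx
    have ham : a ∈ N.treeComp x := N.apex_mem ha.1
    have hat : N.isTreeN a := N.treeComp_tree hx ham
    have haroot : a ≠ N.root := fun h => hroot (h ▸ ham)
    obtain ⟨u, hu⟩ := N.indeg_pos haroot
    have hunt : ¬ N.isTreeN u := fun hut => ha.2 u ⟨hu, hut, hat⟩
    refine ⟨N.comp u, ?_, u, a, hu, rfl, ?_⟩
    · intro h
      have : x ∈ N.comp u := by
        rw [h, hcx]; exact ReflTransGen.refl
      rw [N.comp_of_nontree hbin hgal hunt] at this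
      exact hunt (this ▸ hx)
    · rw [N.comp_of_tree hat, N.treeComp_eq ham, hcx]
  · have hcx : N.comp x = {x} := N.comp_of_nontree hbin hgal hx
    have hxroot : x ≠ N.root := fun h => hx (Or.inl h)
    have hpar : ∃ u, N.E u x := by
      by_cases hrx : N.isRetic x
      · have h2 : ({u | N.E u x} : Set V).ncard = 2 := hbin.1 x hrx
        have : ({u | N.E u x} : Set V).Nonempty :=
          (Set.ncard_pos (Set.toFinite _)).mp (by omega)
        exact this
      · exact N.indeg_pos hxroot
    obtain ⟨u, hu⟩ := hpar
    refine ⟨N.comp u, ?_, u, x, hu, rfl, rfl⟩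
    intro h
    have hx2 : u ∈ N.comp x := by rw [← h]; exact N.mem_comp_self u
    rw [hcx] at hx2
    have : u = x := hx2
    subst this
    exact N.acyclic u (TransGen.single hu)

end Aux

end RPN

/-- The compression of a binary galled network is a tree: it contains no
reticulate node and every non-root node has indegree 1. -/
theorem stmt14 [Fintype V] (N : RPN V) (hbin : N.Binary) (hgal : N.Galled) :
    (∀ A ∈ Set.range N.comp, ¬ 2 ≤ Set.ncard {B | N.compE B A}) ∧
    (∀ A ∈ Set.range N.comp, A ≠ N.comp N.root → Set.ncard {B | N.compE B A} = 1) := by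
  have hsub := N.compE_subsingleton hbin hgal
  have hnon := N.compE_nonempty hbin hgal
  constructor
  · rintro A ⟨x, rfl⟩ hge
    have h1 : {B | N.compE B (N.comp x)}.ncard ≤ 1 :=
      (Set.ncard_le_one_iff_eq (Set.toFinite _)).mpr
        (by rcases (hsub x).eq_empty_or_singleton with h | ⟨a, h⟩
            exacts [Or.inl h, Or.inr ⟨a, h⟩])
    omega
  · rintro A ⟨x, rfl⟩ hne
    obtain ⟨B, hB⟩ := hnon x hne
    have hS : {B' | N.compE B' (N.comp x)} = {B} :=
      Set.eq_singleton_iff_unique_mem.mpr ⟨hB, fun y hy => hsub x hy hB⟩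
    rw [hS, Set.ncard_singleton]
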